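/- Let (Ω,ρ) be a metric space, r ∈ [1,∞), x₀ ∈ Ω, and let {w_k}_{k≥0} be a non-decreasing real sequence with w_0 = 0 and w_k → ∞. For each k ≥ 0 set B_k := {x ∈ Ω : w_k ≤ ρ(x₀,x) < w_{k+1}}. Then there exists a constant C_r depending only on r such that for all Borel probability measures P and Q on Ω, W_r^r(P,Q) ≤ C_r · ∑_{k=0}^∞ [ min{P(B_k), Q(B_k)} · W_r^r(P_{B_k}, Q_{B_k}) + w_{k+1}^r · |P(B_k) − Q(B_k)| ], where for a Borel set A with P(A) > 0, P_A denotes the conditional measure P_A(E) := P(E ∩ A)/P(A), and the term min{P(B_k),Q(B_k)} · W_r^r(P_{B_k},Q_{B_k}) is interpreted as 0 when P(B_k) = 0 or Q(B_k) = 0. -/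

import Mathlib

open MeasureTheory ENNReal

noncomputable section

/-- The set of couplings of two measures. -/
def couplings {Ω : Type*} [MeasurableSpace Ω] (P Q : Measure Ω) : Set (Measure (Ω × Ω)) :=
  {μ | μ.map Prod.fst = P ∧ μ.map Prod.snd = Q}

/-- `W_r^r(P,Q)`, the `r`-th power of the `r`-Wasserstein distance. -/
def wassersteinPow {Ω : Type*} [MeasurableSpace Ω] [PseudoEMetricSpace Ω] (r : ℝ)
    (P Q : Measure Ω) : ℝ≥0∞ :=
  ⨅ μ ∈ couplings P Q, ∫⁻ p : Ω × Ω, edist p.1 p.2 ^ r ∂μ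

/-- The `r`-Wasserstein distance. -/
def wasserstein {Ω : Type*} [MeasurableSpace Ω] [PseudoEMetricSpace Ω] (r : ℝ)
    (P Q : Measure Ω) : ℝ≥0∞ :=
  (wassersteinPow r P Q) ^ (1 / r)

/-- The empirical measure of `n` samples. -/
def empiricalMeasure {Ω : Type*} [MeasurableSpace Ω] (n : ℕ) (x : Fin n → Ω) : Measure Ω :=
  (n : ℝ≥0∞)⁻¹ • ∑ i : Fin n, Measure.dirac (x i)

/-- `𝒮` is a countable-or-not Borel partition of the set `B`. -/
def IsBorelPartitionOf {Ω : Type*} [MeasurableSpace Ω] (𝒮 : Set (Set Ω)) (B : Set Ω) : Prop :=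
  (∀ S ∈ 𝒮, MeasurableSet S) ∧ ⋃₀ 𝒮 = B ∧ 𝒮.PairwiseDisjoint id

/-- The resolution of a partition: the largest diameter of any of its elements. -/
def partRes {Ω : Type*} [PseudoEMetricSpace Ω] (𝒮 : Set (Set Ω)) : ℝ≥0∞ :=
  ⨆ S ∈ 𝒮, EMetric.diam S

/-- The `ε`-covering number of a Borel set `B`: the minimal cardinality of a countable
Borel partition of `B` all of whose elements have diameter at most `ε`. -/
def coveringNumber {Ω : Type*} [MeasurableSpace Ω] [PseudoEMetricSpace Ω]
    (B : Set Ω) (ε : ℝ) : ℝ≥0∞ :=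
  ⨅ (𝒮 : Set (Set Ω)) (_ : IsBorelPartitionOf 𝒮 B ∧ 𝒮.Countable ∧
      ∀ S ∈ 𝒮, EMetric.diam S ≤ ENNReal.ofReal ε), (𝒮.encard : ℝ≥0∞)

/-- The separation of a set: the smallest distance between distinct points. -/
def eSep {Ω : Type*} [PseudoEMetricSpace Ω] (S : Set Ω) : ℝ≥0∞ :=
  ⨅ (x ∈ S) (y ∈ S) (_ : x ≠ y), edist x y

/-- `|a - b|` for extended nonnegative reals. -/
def ennrDiff (a b : ℝ≥0∞) : ℝ≥0∞ := (a - b) + (b - a)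

/-- The `ℓ`-th metric moment of `P` about `x₀`. -/
def metricMoment {Ω : Type*} [MeasurableSpace Ω] [PseudoEMetricSpace Ω]
    (P : Measure Ω) (x₀ : Ω) (ℓ : ℝ) : ℝ≥0∞ :=
  (∫⁻ y, edist x₀ y ^ ℓ ∂P) ^ (1 / ℓ)

end

open scoped ProbabilityTheory

private lemma measure_map_sum' {α β : Type*} [MeasurableSpace α] [MeasurableSpace β]
    (μ : ℕ → Measure α) {f : α → β} (hf : Measurable f) :
    (Measure.sum μ).map f = Measure.sum (fun i => (μ i).map f) := by
  ext s hs
  rw [Measure.map_apply hf hs, Measure.sum_apply _ hs, Measure.sum_apply _ (hf hs)]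
  simp_rw [Measure.map_apply hf hs]

private lemma ennrDiff_aux (a b : ℝ≥0∞) :
    (a - min a b) + (b - min a b) = ennrDiff a b := by
  rw [ennrDiff]
  rcases le_total a b with h | h
  · simp [min_eq_left h, tsub_eq_zero_of_le h]
  · simp [min_eq_right h, tsub_eq_zero_of_le h]

/-- Lemma 5: decomposition of the Wasserstein distance over spherical shells. -/
theorem stmt_7 {Ω : Type*} [MetricSpace Ω] [MeasurableSpace Ω] [BorelSpace Ω]
    (r : ℝ) (hr : 1 ≤ r) (x₀ : Ω)
    (w : ℕ → ℝ) (hw0 : w 0 = 0) (hwmono : Monotone w)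
    (hwlim : Filter.Tendsto w Filter.atTop Filter.atTop)
    (B : ℕ → Set Ω) (hB : ∀ k, B k = {x : Ω | w k ≤ dist x₀ x ∧ dist x₀ x < w (k + 1)}) :
    ∃ C : ℝ≥0∞, 0 < C ∧ C ≠ ⊤ ∧
      ∀ P Q : MeasureTheory.Measure Ω,
        MeasureTheory.IsProbabilityMeasure P → MeasureTheory.IsProbabilityMeasure Q →
        wassersteinPow r P Q
          ≤ C * ∑' k : ℕ,
              (min (P (B k)) (Q (B k))
                  * wassersteinPow r (ProbabilityTheory.cond P (B k))
                      (ProbabilityTheory.cond Q (B k))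
                + ENNReal.ofReal (w (k + 1) ^ r) * ennrDiff (P (B k)) (Q (B k))) := by
  classical
  have hr0 : (0:ℝ) ≤ r := zero_le_one.trans hr
  set C : ℝ≥0∞ := 2 ^ (r - 1) with hCdef
  have hC1 : 1 ≤ C := by
    rw [hCdef]
    calc (1:ℝ≥0∞) = 2 ^ (0:ℝ) := by rw [ENNReal.rpow_zero]
    _ ≤ 2 ^ (r-1) := ENNReal.rpow_le_rpow_of_exponent_le one_le_two (by linarith)
  have hCpos : 0 < C := lt_of_lt_of_le zero_lt_one hC1
  have hCtop : C ≠ ⊤ := ENNReal.rpow_ne_top_of_nonneg (by linarith) (by norm_num)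
  refine ⟨C, hCpos, hCtop, ?_⟩
  intro P Q hPm hQm
  haveI := hPm
  haveI := hQm
  -- basic properties of the shells
  have hwnn : ∀ k, 0 ≤ w k := fun k => hw0 ▸ hwmono (Nat.zero_le k)
  have hdistm : Measurable fun x : Ω => dist x₀ x :=
    (continuous_const.dist continuous_id).measurable
  have hBmeas : ∀ k, MeasurableSet (B k) := by
    intro k
    rw [hB k]
    exact (measurableSet_le measurable_const hdistm).inter
      (measurableSet_lt hdistm measurable_const)
  have hBdisj : Pairwise (Function.onFun Disjoint B) := by
    have key : ∀ i j, i < j → Disjoint (B i) (B j) := by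
      intro i j hij
      rw [Set.disjoint_left]
      intro x hxi hxj
      rw [hB i] at hxi
      rw [hB j] at hxj
      simp only [Set.mem_setOf_eq] at hxi hxj
      have h1 : w (i+1) ≤ w j := hwmono hij
      linarith [hxi.2, hxj.1]
    intro i j hne
    rcases hne.lt_or_gt with h | h
    · exact key i j h
    · exact (key j i h).symm
  have hBunion : (⋃ k, B k) = Set.univ := by
    ext x
    simp only [Set.mem_iUnion, Set.mem_univ, iff_true]
    have hex : ∃ n, dist x₀ x < w (n + 1) := by
      obtain ⟨N, hN⟩ := (hwlim.eventually_gt_atTop (dist x₀ x)).exists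
      exact ⟨N, hN.trans_le (hwmono (Nat.le_succ N))⟩
    refine ⟨Nat.find hex, ?_⟩
    rw [hB]
    refine ⟨?_, Nat.find_spec hex⟩
    by_cases h0 : Nat.find hex = 0
    · rw [h0, hw0]; exact dist_nonneg
    · obtain ⟨n, hn⟩ := Nat.exists_eq_succ_of_ne_zero h0
      have := Nat.find_min hex (hn ▸ n.lt_succ_self)
      rw [hn]
      exact not_lt.mp this
  -- the cost integrand restricted to one coordinate
  set f : Ω → ℝ≥0∞ := fun x => edist x₀ x ^ r with hfdef
  have hf : Measurable f :=
    (continuous_const.edist continuous_id).measurable.pow measurable_const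
  set c : ℕ → ℝ≥0∞ := fun k => ENNReal.ofReal (w (k+1) ^ r) with hcdef
  have hshell : ∀ k, ∀ x ∈ B k, f x ≤ c k := by
    intro k x hx
    rw [hB k] at hx
    rw [hfdef, hcdef]
    simp only [Set.mem_setOf_eq] at hx
    calc edist x₀ x ^ r = ENNReal.ofReal (dist x₀ x) ^ r := by rw [edist_dist]
    _ ≤ ENNReal.ofReal (w (k+1)) ^ r :=
        ENNReal.rpow_le_rpow (ENNReal.ofReal_le_ofReal hx.2.le) hr0
    _ = ENNReal.ofReal (w (k+1) ^ r) := ENNReal.ofReal_rpow_of_nonneg (hwnn _) hr0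
  -- conditional measure facts
  have hcondP : ∀ k, (P (B k)) • (P[|B k]) = P.restrict (B k) := by
    intro k
    rw [ProbabilityTheory.cond, smul_smul]
    rcases eq_or_ne (P (B k)) 0 with h | h
    · rw [h, Measure.restrict_eq_zero.mpr h]
      simp
    · rw [ENNReal.mul_inv_cancel h (measure_ne_top P _), one_smul]
  have hcondQ : ∀ k, (Q (B k)) • (Q[|B k]) = Q.restrict (B k) := by
    intro k
    rw [ProbabilityTheory.cond, smul_smul]
    rcases eq_or_ne (Q (B k)) 0 with h | h
    · rw [h, Measure.restrict_eq_zero.mpr h]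
      simp
    · rw [ENNReal.mul_inv_cancel h (measure_ne_top Q _), one_smul]
  have hcIntP : ∀ k, ∫⁻ x, f x ∂(P[|B k]) ≤ c k := by
    intro k
    rw [ProbabilityTheory.cond, lintegral_smul_measure]
    have h1 : ∫⁻ x in B k, f x ∂P ≤ c k * P (B k) := by
      calc ∫⁻ x in B k, f x ∂P ≤ ∫⁻ _ in B k, c k ∂P :=
            setLIntegral_mono measurable_const (hshell k)
      _ = c k * P (B k) := by rw [setLIntegral_const]
    calc (P (B k))⁻¹ * ∫⁻ x in B k, f x ∂P
        ≤ (P (B k))⁻¹ * (c k * P (B k)) := by gcongr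
    _ = c k * ((P (B k))⁻¹ * P (B k)) := by ring
    _ ≤ c k * 1 := by
        gcongr
        exact ENNReal.inv_mul_le_one _
    _ = c k := mul_one _
  have hcIntQ : ∀ k, ∫⁻ x, f x ∂(Q[|B k]) ≤ c k := by
    intro k
    rw [ProbabilityTheory.cond, lintegral_smul_measure]
    have h1 : ∫⁻ x in B k, f x ∂Q ≤ c k * Q (B k) := by
      calc ∫⁻ x in B k, f x ∂Q ≤ ∫⁻ _ in B k, c k ∂Q :=
            setLIntegral_mono measurable_const (hshell k)
      _ = c k * Q (B k) := by rw [setLIntegral_const]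
    calc (Q (B k))⁻¹ * ∫⁻ x in B k, f x ∂Q
        ≤ (Q (B k))⁻¹ * (c k * Q (B k)) := by gcongr
    _ = c k * ((Q (B k))⁻¹ * Q (B k)) := by ring
    _ ≤ c k * 1 := by
        gcongr
        exact ENNReal.inv_mul_le_one _
    _ = c k := mul_one _
  have hcondUnivP : ∀ k (a : ℝ≥0∞), a ≤ P (B k) →
      (P (B k) - a) * (P[|B k]) Set.univ = P (B k) - a := by
    intro k a ha
    rw [ProbabilityTheory.cond_apply (hBmeas k), Set.inter_univ]
    rcases eq_or_ne (P (B k)) 0 with h | h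
    · have : P (B k) - a = 0 := by simp [h, zero_tsub]
      rw [this, zero_mul]
    · rw [ENNReal.inv_mul_cancel h (measure_ne_top P _), mul_one]
  have hcondUnivQ : ∀ k (a : ℝ≥0∞), a ≤ Q (B k) →
      (Q (B k) - a) * (Q[|B k]) Set.univ = Q (B k) - a := by
    intro k a ha
    rw [ProbabilityTheory.cond_apply (hBmeas k), Set.inter_univ]
    rcases eq_or_ne (Q (B k)) 0 with h | h
    · have : Q (B k) - a = 0 := by simp [h, zero_tsub]
      rw [this, zero_mul]
    · rw [ENNReal.inv_mul_cancel h (measure_ne_top Q _), mul_one]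
  -- abbreviations
  set m : ℕ → ℝ≥0∞ := fun k => min (P (B k)) (Q (B k)) with hmdef
  set W : ℕ → ℝ≥0∞ := fun k => wassersteinPow r (P[|B k]) (Q[|B k]) with hWdef
  set S : ℝ≥0∞ := ∑' k : ℕ, (m k * W k + c k * ennrDiff (P (B k)) (Q (B k))) with hSdef
  show wassersteinPow r P Q ≤ C * S
  have hm1 : ∀ k, m k ≤ 1 := fun k =>
    le_trans (min_le_left _ _) prob_le_one
  have hmP : ∀ k, m k ≤ P (B k) := fun k => min_le_left _ _
  have hmQ : ∀ k, m k ≤ Q (B k) := fun k => min_le_right _ _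
  apply ENNReal.le_of_forall_pos_le_add
  intro ε hε hCS
  have hS_top : S ≠ ⊤ := by
    intro h
    rw [h, ENNReal.mul_top hCpos.ne'] at hCS
    exact absurd hCS (lt_irrefl _)
  -- near-optimal couplings on each shell
  set δ : ℕ → ℝ≥0∞ := fun k => (ε : ℝ≥0∞) * 2⁻¹ ^ (k+1) with hδdef
  have hδ0 : ∀ k, δ k ≠ 0 := by
    intro k
    exact mul_ne_zero (by exact_mod_cast hε.ne') (pow_ne_zero _ (ENNReal.inv_ne_zero.mpr
      ENNReal.ofNat_ne_top))
  have hδsum : ∑' k, δ k = (ε : ℝ≥0∞) := by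
    rw [hδdef]
    rw [ENNReal.tsum_mul_left, ENNReal.tsum_geometric_add_one, ENNReal.one_sub_inv_two,
      inv_inv, ENNReal.inv_mul_cancel two_ne_zero ENNReal.ofNat_ne_top, mul_one]
  have hfinkW : ∀ k, m k * W k ≠ ⊤ := by
    intro k
    refine ne_top_of_le_ne_top hS_top ?_
    calc m k * W k ≤ m k * W k + c k * ennrDiff (P (B k)) (Q (B k)) := self_le_add_right _ _
    _ ≤ S := ENNReal.le_tsum k
  have hex : ∀ k, ∃ μk : Measure (Ω × Ω),
      (m k • μk).map Prod.fst = m k • (P[|B k]) ∧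
      (m k • μk).map Prod.snd = m k • (Q[|B k]) ∧
      m k * ∫⁻ pr : Ω × Ω, edist pr.1 pr.2 ^ r ∂μk ≤ m k * W k + δ k := by
    intro k
    by_cases hmk : m k = 0
    · refine ⟨0, ?_, ?_, ?_⟩
      · rw [hmk, zero_smul, Measure.map_zero, zero_smul]
      · rw [hmk, zero_smul, Measure.map_zero, zero_smul]
      · rw [hmk, zero_mul]; exact zero_le
    · have hWtop : W k ≠ ⊤ := by
        intro h
        exact hfinkW k (by rw [h, ENNReal.mul_top hmk])
      have hlt : W k < W k + δ k := ENNReal.lt_add_right hWtop (hδ0 k)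
      have hlt' : (⨅ μ ∈ couplings (P[|B k]) (Q[|B k]),
          ∫⁻ pr : Ω × Ω, edist pr.1 pr.2 ^ r ∂μ) < W k + δ k := hlt
      obtain ⟨μk, hμk⟩ := iInf_lt_iff.mp hlt'
      have hmem : μk ∈ couplings (P[|B k]) (Q[|B k]) := by
        by_contra hc
        rw [iInf_neg hc] at hμk
        exact (not_top_lt hμk).elim
      rw [iInf_pos hmem] at hμk
      refine ⟨μk, ?_, ?_, ?_⟩
      · rw [Measure.map_smul, hmem.1]
      · rw [Measure.map_smul, hmem.2]
      · calc m k * ∫⁻ pr : Ω × Ω, edist pr.1 pr.2 ^ r ∂μk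
            ≤ m k * (W k + δ k) := mul_le_mul_right hμk.le _
        _ = m k * W k + m k * δ k := mul_add _ _ _
        _ ≤ m k * W k + 1 * δ k := by gcongr; exact hm1 k
        _ = m k * W k + δ k := by rw [one_mul]
  choose μ' hμ'1 hμ'2 hμ'3 using hex
  -- residual measures
  set p : ℕ → ℝ≥0∞ := fun k => P (B k) - m k with hpdef
  set q : ℕ → ℝ≥0∞ := fun k => Q (B k) - m k with hqdef
  set Pres : Measure Ω := Measure.sum (fun k => p k • (P[|B k])) with hPresdef
  set Qres : Measure Ω := Measure.sum (fun k => q k • (Q[|B k])) with hQresdef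
  set mm : ℝ≥0∞ := ∑' k, p k with hmmdef
  have hsumP : ∑' k, P (B k) = 1 := by
    rw [← measure_iUnion hBdisj hBmeas, hBunion, measure_univ]
  have hsumQ : ∑' k, Q (B k) = 1 := by
    rw [← measure_iUnion hBdisj hBmeas, hBunion, measure_univ]
  have hmtsum_le : ∑' k, m k ≤ 1 := by
    rw [← hsumP]
    exact ENNReal.tsum_le_tsum hmP
  have hmtsum_top : ∑' k, m k ≠ ⊤ := (lt_of_le_of_lt hmtsum_le one_lt_top).ne
  have hpm : ∀ k, p k + m k = P (B k) := fun k => tsub_add_cancel_of_le (hmP k)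
  have hqm : ∀ k, q k + m k = Q (B k) := fun k => tsub_add_cancel_of_le (hmQ k)
  have hqq : ∑' k, q k = mm := by
    rw [hmmdef]
    have h1 : (∑' k, q k) + ∑' k, m k = (∑' k, p k) + ∑' k, m k := by
      rw [← ENNReal.tsum_add, ← ENNReal.tsum_add]
      simp_rw [hqm, hpm, hsumP, hsumQ]
    exact (ENNReal.add_left_inj hmtsum_top).mp h1
  have hmm_le : mm ≤ 1 := by
    rw [hmmdef, ← hsumP]
    exact ENNReal.tsum_le_tsum (fun k => tsub_le_self)
  have hmm_top : mm ≠ ⊤ := (lt_of_le_of_lt hmm_le one_lt_top).ne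
  have hPres_univ : Pres Set.univ = mm := by
    rw [hPresdef, Measure.sum_apply _ MeasurableSet.univ]
    simp_rw [Measure.smul_apply, smul_eq_mul]
    rw [hmmdef]
    congr 1
    ext k
    exact hcondUnivP k (m k) (hmP k)
  have hQres_univ : Qres Set.univ = mm := by
    rw [hQresdef, Measure.sum_apply _ MeasurableSet.univ]
    simp_rw [Measure.smul_apply, smul_eq_mul]
    rw [← hqq]
    congr 1
    ext k
    exact hcondUnivQ k (m k) (hmQ k)
  haveI hsfcP : ∀ k, SFinite (P[|B k]) := fun k => by
    rw [ProbabilityTheory.cond]; infer_instance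
  haveI hsfcQ : ∀ k, SFinite (Q[|B k]) := fun k => by
    rw [ProbabilityTheory.cond]; infer_instance
  haveI : SFinite Pres := by
    rw [hPresdef]; infer_instance
  haveI : SFinite Qres := by
    rw [hQresdef]; infer_instance
  -- the residual coupling
  set ν₂ : Measure (Ω × Ω) := mm⁻¹ • (Pres.prod Qres) with hν₂def
  have hν₂fst : ν₂.map Prod.fst = Pres := by
    by_cases hmm0 : mm = 0
    · have hp0 : ∀ k, p k = 0 := by
        intro k
        exact (ENNReal.tsum_eq_zero.mp (hmmdef.symm.trans hmm0)) k
      have hPres0 : Pres = 0 := by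
        rw [hPresdef]
        have heq : (fun k => p k • (P[|B k])) = fun _ => (0 : Measure Ω) :=
          funext fun k => by rw [hp0 k, zero_smul]
        rw [heq]
        exact Measure.sum_zero
      rw [hν₂def, hPres0, Measure.zero_prod, smul_zero, Measure.map_zero]
    · rw [hν₂def, Measure.map_smul, Measure.map_fst_prod, hQres_univ, smul_smul,
        ENNReal.inv_mul_cancel hmm0 hmm_top, one_smul]
  have hν₂snd : ν₂.map Prod.snd = Qres := by
    by_cases hmm0 : mm = 0
    · have hq0 : Qres = 0 := by
        have hQu := hQres_univ
        rw [hmm0] at hQu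
        ext s hs
        simp only [Measure.coe_zero, Pi.zero_apply]
        exact le_antisymm (le_trans (measure_mono (Set.subset_univ s)) hQu.le) zero_le
      rw [hν₂def, hq0, Measure.prod_zero, smul_zero, Measure.map_zero]
    · rw [hν₂def, Measure.map_smul, Measure.map_snd_prod, hPres_univ, smul_smul,
        ENNReal.inv_mul_cancel hmm0 hmm_top, one_smul]
  -- the full coupling
  set μfull : Measure (Ω × Ω) := Measure.sum (fun k => m k • μ' k) + ν₂ with hμfulldef
  have hfst : μfull.map Prod.fst = P := by
    rw [hμfulldef, Measure.map_add _ _ measurable_fst,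
      measure_map_sum' _ measurable_fst, hν₂fst, hPresdef]
    simp_rw [hμ'1]
    rw [Measure.sum_add_sum]
    have heq : (fun k => m k • (P[|B k]) + p k • (P[|B k])) = fun k => P.restrict (B k) := by
      funext k
      rw [← add_smul, add_comm (m k), hpm k, hcondP k]
    rw [heq, ← Measure.restrict_iUnion hBdisj hBmeas, hBunion, Measure.restrict_univ]
  have hsnd : μfull.map Prod.snd = Q := by
    rw [hμfulldef, Measure.map_add _ _ measurable_snd,
      measure_map_sum' _ measurable_snd, hν₂snd, hQresdef]
    simp_rw [hμ'2]
    rw [Measure.sum_add_sum]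
    have heq : (fun k => m k • (Q[|B k]) + q k • (Q[|B k])) = fun k => Q.restrict (B k) := by
      funext k
      rw [← add_smul, add_comm (m k), hqm k, hcondQ k]
    rw [heq, ← Measure.restrict_iUnion hBdisj hBmeas, hBunion, Measure.restrict_univ]
  -- the Wasserstein distance is bounded by the cost of this coupling
  have hWle : wassersteinPow r P Q ≤ ∫⁻ pr : Ω × Ω, edist pr.1 pr.2 ^ r ∂μfull :=
    iInf₂_le μfull ⟨hfst, hsnd⟩
  -- cost of the residual coupling
  have hresP : ∫⁻ x, f x ∂Pres ≤ ∑' k, p k * c k := by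
    rw [hPresdef, lintegral_sum_measure]
    refine ENNReal.tsum_le_tsum fun k => ?_
    rw [lintegral_smul_measure]
    exact mul_le_mul_right (hcIntP k) _
  have hresQ : ∫⁻ x, f x ∂Qres ≤ ∑' k, q k * c k := by
    rw [hQresdef, lintegral_sum_measure]
    refine ENNReal.tsum_le_tsum fun k => ?_
    rw [lintegral_smul_measure]
    exact mul_le_mul_right (hcIntQ k) _
  have hpt : ∀ pr : Ω × Ω, edist pr.1 pr.2 ^ r ≤ C * (f pr.1 + f pr.2) := by
    intro pr
    have htri : edist pr.1 pr.2 ≤ edist x₀ pr.1 + edist x₀ pr.2 := by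
      rw [edist_comm x₀ pr.1]
      exact edist_triangle _ _ _
    calc edist pr.1 pr.2 ^ r ≤ (edist x₀ pr.1 + edist x₀ pr.2) ^ r :=
          ENNReal.rpow_le_rpow htri hr0
    _ ≤ C * (edist x₀ pr.1 ^ r + edist x₀ pr.2 ^ r) :=
          ENNReal.rpow_add_le_mul_rpow_add_rpow _ _ hr
    _ = C * (f pr.1 + f pr.2) := by rw [hfdef]
  have hprod : ∫⁻ pr : Ω × Ω, edist pr.1 pr.2 ^ r ∂(Pres.prod Qres)
      ≤ C * (mm * ∫⁻ x, f x ∂Pres + mm * ∫⁻ x, f x ∂Qres) := by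
    calc ∫⁻ pr : Ω × Ω, edist pr.1 pr.2 ^ r ∂(Pres.prod Qres)
        ≤ ∫⁻ pr : Ω × Ω, C * (f pr.1 + f pr.2) ∂(Pres.prod Qres) := lintegral_mono hpt
    _ = C * ∫⁻ pr : Ω × Ω, (f pr.1 + f pr.2) ∂(Pres.prod Qres) :=
          lintegral_const_mul' _ _ hCtop
    _ = C * (∫⁻ pr : Ω × Ω, f pr.1 ∂(Pres.prod Qres)
          + ∫⁻ pr : Ω × Ω, f pr.2 ∂(Pres.prod Qres)) := by
          congr 1
          exact lintegral_add_left (hf.comp measurable_fst) fun pr => f pr.2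
    _ = C * (mm * ∫⁻ x, f x ∂Pres + mm * ∫⁻ x, f x ∂Qres) := by
          congr 1
          congr 1
          · rw [← lintegral_map hf measurable_fst, Measure.map_fst_prod, hQres_univ,
              lintegral_smul_measure, smul_eq_mul]
          · rw [← lintegral_map hf measurable_snd, Measure.map_snd_prod, hPres_univ,
              lintegral_smul_measure, smul_eq_mul]
  have hν₂cost : ∫⁻ pr : Ω × Ω, edist pr.1 pr.2 ^ r ∂ν₂
      ≤ C * ((∑' k, p k * c k) + ∑' k, q k * c k) := by
    rw [hν₂def, lintegral_smul_measure]
    calc mm⁻¹ * ∫⁻ pr : Ω × Ω, edist pr.1 pr.2 ^ r ∂(Pres.prod Qres)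
        ≤ mm⁻¹ * (C * (mm * ∫⁻ x, f x ∂Pres + mm * ∫⁻ x, f x ∂Qres)) :=
          mul_le_mul_right hprod _
    _ = C * ((mm⁻¹ * mm) * (∫⁻ x, f x ∂Pres + ∫⁻ x, f x ∂Qres)) := by ring
    _ ≤ C * (1 * (∫⁻ x, f x ∂Pres + ∫⁻ x, f x ∂Qres)) := by
          gcongr
          exact ENNReal.inv_mul_le_one _
    _ = C * (∫⁻ x, f x ∂Pres + ∫⁻ x, f x ∂Qres) := by rw [one_mul]
    _ ≤ C * ((∑' k, p k * c k) + ∑' k, q k * c k) := by gcongr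
  -- identify the residual masses with the ennrDiff terms
  have hdiff : (∑' k, p k * c k) + ∑' k, q k * c k
      = ∑' k, c k * ennrDiff (P (B k)) (Q (B k)) := by
    rw [← ENNReal.tsum_add]
    congr 1
    funext k
    rw [← add_mul, hpdef, hqdef]
    simp only
    rw [ennrDiff_aux (P (B k)) (Q (B k)), mul_comm]
  -- total cost estimate
  have hcost : ∫⁻ pr : Ω × Ω, edist pr.1 pr.2 ^ r ∂μfull
      ≤ (∑' k, m k * W k) + (ε : ℝ≥0∞) + C * ∑' k, c k * ennrDiff (P (B k)) (Q (B k)) := by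
    rw [hμfulldef, lintegral_add_measure, lintegral_sum_measure]
    simp_rw [lintegral_smul_measure]
    gcongr ?_ + ?_
    · calc ∑' k, m k * ∫⁻ pr : Ω × Ω, edist pr.1 pr.2 ^ r ∂(μ' k)
          ≤ ∑' k, (m k * W k + δ k) := ENNReal.tsum_le_tsum hμ'3
      _ = (∑' k, m k * W k) + ∑' k, δ k := ENNReal.tsum_add
      _ = (∑' k, m k * W k) + (ε : ℝ≥0∞) := by rw [hδsum]
    · rw [← hdiff]
      exact hν₂cost
  -- conclude
  refine le_trans hWle (le_trans hcost ?_)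
  have hfinal : (∑' k, m k * W k) + C * ∑' k, c k * ennrDiff (P (B k)) (Q (B k))
      ≤ C * S := by
    calc (∑' k, m k * W k) + C * ∑' k, c k * ennrDiff (P (B k)) (Q (B k))
        ≤ C * (∑' k, m k * W k) + C * ∑' k, c k * ennrDiff (P (B k)) (Q (B k)) := by
          gcongr
          exact le_mul_of_one_le_left zero_le hC1
    _ = C * ((∑' k, m k * W k) + ∑' k, c k * ennrDiff (P (B k)) (Q (B k))) :=
          (mul_add _ _ _).symm
    _ = C * S := by rw [hSdef, ENNReal.tsum_add]
  calc (∑' k, m k * W k) + (ε : ℝ≥0∞) + C * ∑' k, c k * ennrDiff (P (B k)) (Q (B k))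
      = (∑' k, m k * W k) + C * (∑' k, c k * ennrDiff (P (B k)) (Q (B k))) + (ε : ℝ≥0∞) := by
        ring
  _ ≤ C * S + (ε : ℝ≥0∞) := by gcongr -- uses hfinal?
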